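/- Let g be a 2n-dimensional Lie algebra with (1,0)-coframe {ω¹,…,ω^{n}} satisfying dω^j = A^j ω^{n}∧ω^{j} + B^j ω̄^{n}∧ω^{j} for j = 1,…,n−1 and dω^n = 0, with A^j, B^j ∈ ℂ. If a Hermitian 2-form F = (i/2)Σ_{h} α_{h h̄} ω^{h}∧ω̄^{h} + (off-diagonal terms Σ_{h≠k} α_{h k̄} ω^h∧ω̄^k) with all α_{j j̄} > 0 satisfies ∂∂̄F = 0, then |B^j + conj(A^j)|² = 0 for every j ∈ {1,…,n−1}, and consequently the diagonal form F̃ = (i/2) Σ_{h=1}^{n} ω^{h}∧ω̄^{h} satisfies dF̃ = 0. -/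

import Mathlib

open ComplexConjugate

def extZero {m : ℕ} (A : Fin m → ℂ) : Fin (m + 1) → ℂ := fun h => Fin.lastCases 0 A h

@[simp] lemma extZero_last {m : ℕ} (A : Fin m → ℂ) : extZero A (Fin.last m) = 0 := by
  simp [extZero]

@[simp] lemma extZero_castSucc {m : ℕ} (A : Fin m → ℂ) (j : Fin m) :
    extZero A j.castSucc = A j := by
  simp [extZero]

def gam {m : ℕ} (A B : Fin m → ℂ) (h k : Fin (m + 1)) : ℂ :=
  (extZero A h + (starRingEnd ℂ) (extZero B k)) * (extZero B h + (starRingEnd ℂ) (extZero A k))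

lemma keyCalc {Λ : Type*} [Ring Λ] [Algebra ℂ Λ] (dp db : Λ →ₗ[ℂ] Λ)
    (p q x y : Λ) (α β γ δ : ℂ)
    (hxp : ∀ z, x * (p * z) = -(p * (x * z)))
    (hxq : ∀ z, x * (q * z) = -(q * (x * z)))
    (hqp : ∀ z, q * (p * z) = -(p * (q * z)))
    (hdbxy : db (x * y) = db x * y - x * db y)
    (hdpxy : dp (x * y) = dp x * y - x * dp y)
    (hdpq1 : dp (q * (x * y)) = dp q * (x * y) - q * dp (x * y))
    (hdpx1 : dp (x * (q * y)) = dp x * (q * y) - x * dp (q * y))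
    (hdpqy : dp (q * y) = dp q * y - q * dp y)
    (hdpx : dp x = α • (p * x)) (hdbx : db x = β • (q * x))
    (hdpy : dp y = γ • (p * y)) (hdby : db y = δ • (q * y))
    (hdpq : dp q = 0) :
    dp (db (x * y)) = ((α + γ) * (β + δ)) • (p * q * x * y) := by
  rw [hdbxy, hdbx, hdby, smul_mul_assoc, mul_smul_comm, map_sub, map_smul, map_smul,
    mul_assoc q x y, hdpq1, hdpx1, hdpqy, hdpxy, hdpx, hdpy, hdpq]
  simp only [smul_mul_assoc, mul_smul_comm, smul_smul, smul_sub, mul_sub, sub_mul, zero_mul,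
    mul_zero, zero_smul, smul_zero, zero_sub, sub_zero, mul_assoc, hxp, hxq, hqp, mul_neg,
    neg_mul, smul_neg, neg_neg, neg_smul]
  match_scalars <;> ring

lemma dCalc {Λ : Type*} [Ring Λ] [Algebra ℂ Λ] (d : Λ →ₗ[ℂ] Λ)
    (p q x y : Λ) (α β γ δ : ℂ)
    (hxp : ∀ z, x * (p * z) = -(p * (x * z)))
    (hxq : ∀ z, x * (q * z) = -(q * (x * z)))
    (hL : d (x * y) = d x * y - x * d y)
    (hdx : d x = α • (p * x) + β • (q * x))
    (hdy : d y = γ • (q * y) + δ • (p * y))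
    (h1 : α + δ = 0) (h2 : β + γ = 0) : d (x * y) = 0 := by
  rw [hL, hdx, hdy]
  simp only [add_mul, mul_add, smul_mul_assoc, mul_smul_comm, mul_assoc, hxp, hxq, smul_neg,
    mul_neg, neg_mul, neg_neg]
  match_scalars <;> (first | linear_combination h1 | linear_combination h2)


/-- For a `2n`-dimensional Lie algebra (`n = m + 1`) with (1,0)-coframe
`ω¹,…,ωⁿ` satisfying `dωʲ = Aʲ ωⁿ∧ωʲ + Bʲ ω̄ⁿ∧ωʲ` for `j ≤ n−1` and `dωⁿ = 0`:
if a Hermitian 2-form `F = (i/2)Σ α_{hh̄} ω^h∧ω̄^h + Σ_{h≠k} α_{hk̄} ω^h∧ω̄^k`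
with all diagonal coefficients `α_{hh̄} > 0` satisfies `∂∂̄F = 0`, then
`|Bʲ + conj Aʲ|² = 0` for every `j ≤ n−1`, and the diagonal form
`F̃ = (i/2) Σ_h ω^h∧ω̄^h` satisfies `dF̃ = 0`. -/
theorem stmt7 {Λ : Type*} [Ring Λ] [Algebra ℂ Λ] (m : ℕ)
    (d dp db : Λ →ₗ[ℂ] Λ)
    (ω ωb : Fin (m + 1) → Λ) (A B : Fin m → ℂ)
    (S : Set Λ) (hS : S = Set.range ω ∪ Set.range ωb)
    (hanti : ∀ x ∈ S, ∀ y ∈ S, x * y = -(y * x))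
    (hdLeib : ∀ x ∈ Submodule.span ℂ S, ∀ y : Λ, d (x * y) = d x * y - x * d y)
    (hpLeib : ∀ x ∈ Submodule.span ℂ S, ∀ y : Λ, dp (x * y) = dp x * y - x * dp y)
    (hbLeib : ∀ x ∈ Submodule.span ℂ S, ∀ y : Λ, db (x * y) = db x * y - x * db y)
    (hdω : ∀ j : Fin m, d (ω j.castSucc) =
      A j • (ω (Fin.last m) * ω j.castSucc) + B j • (ωb (Fin.last m) * ω j.castSucc))
    (hdωb : ∀ j : Fin m, d (ωb j.castSucc) =
      (starRingEnd ℂ) (A j) • (ωb (Fin.last m) * ωb j.castSucc)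
        + (starRingEnd ℂ) (B j) • (ω (Fin.last m) * ωb j.castSucc))
    (hdn : d (ω (Fin.last m)) = 0) (hdbn : d (ωb (Fin.last m)) = 0)
    (hpω : ∀ j : Fin m, dp (ω j.castSucc) = A j • (ω (Fin.last m) * ω j.castSucc))
    (hbω : ∀ j : Fin m, db (ω j.castSucc) = B j • (ωb (Fin.last m) * ω j.castSucc))
    (hpωb : ∀ j : Fin m, dp (ωb j.castSucc) =
      (starRingEnd ℂ) (B j) • (ω (Fin.last m) * ωb j.castSucc))
    (hbωb : ∀ j : Fin m, db (ωb j.castSucc) =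
      (starRingEnd ℂ) (A j) • (ωb (Fin.last m) * ωb j.castSucc))
    (hpn : dp (ω (Fin.last m)) = 0) (hbn : db (ω (Fin.last m)) = 0)
    (hpbn : dp (ωb (Fin.last m)) = 0) (hbbn : db (ωb (Fin.last m)) = 0)
    (αd : Fin (m + 1) → ℝ) (hαd : ∀ h, 0 < αd h)
    (αo : Fin (m + 1) → Fin (m + 1) → ℂ) (hαo : ∀ h, αo h h = 0)
    (F : Λ)
    (hF : F = (∑ h, ((Complex.I / 2) * (αd h : ℂ)) • (ω h * ωb h))
      + ∑ h, ∑ k, αo h k • (ω h * ωb k))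
    (hindep : LinearIndependent ℂ (fun p : Fin m × Fin m =>
      ω (Fin.last m) * ωb (Fin.last m) * ω p.1.castSucc * ωb p.2.castSucc))
    (hSKT : dp (db F) = 0) :
    (∀ j : Fin m, ‖B j + (starRingEnd ℂ) (A j)‖ ^ 2 = 0) ∧
      d ((Complex.I / 2) • ∑ h, ω h * ωb h) = 0 := by
  classical
  have hωS : ∀ h, ω h ∈ S := fun h => by rw [hS]; exact Or.inl ⟨h, rfl⟩
  have hωbS : ∀ h, ωb h ∈ S := fun h => by rw [hS]; exact Or.inr ⟨h, rfl⟩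
  have hspan : ∀ x ∈ S, x ∈ Submodule.span ℂ S := fun x hx => Submodule.subset_span hx
  have hsq : ∀ x ∈ S, x * x = 0 := by
    intro x hx
    have h1 : x * x + x * x = 0 := by
      rw [eq_neg_iff_add_eq_zero.mp (hanti x hx x hx)]
    have h2 : (2 : ℂ) • (x * x) = 0 := by rw [two_smul]; exact h1
    have h3 := congrArg (fun z => ((2 : ℂ)⁻¹) • z) h2
    simpa [smul_smul, inv_mul_cancel₀ (two_ne_zero (α := ℂ))] using h3
  have hswap : ∀ u ∈ S, ∀ v ∈ S, ∀ z : Λ, u * (v * z) = -(v * (u * z)) := by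
    intro u hu v hv z
    rw [← mul_assoc, hanti u hu v hv, neg_mul, mul_assoc]
  have hp2 : ω (Fin.last m) * ω (Fin.last m) = 0 := hsq _ (hωS _)
  have hq2 : ωb (Fin.last m) * ωb (Fin.last m) = 0 := hsq _ (hωbS _)
  -- uniform derivative formulas
  have hpω' : ∀ h, dp (ω h) = extZero A h • (ω (Fin.last m) * ω h) := by
    intro h
    induction h using Fin.lastCases with
    | last => simp [hpn]
    | cast j => simp [hpω j]
  have hbω' : ∀ h, db (ω h) = extZero B h • (ωb (Fin.last m) * ω h) := by
    intro h
    induction h using Fin.lastCases with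
    | last => simp [hbn]
    | cast j => simp [hbω j]
  have hpωb' : ∀ h, dp (ωb h) = (starRingEnd ℂ) (extZero B h) • (ω (Fin.last m) * ωb h) := by
    intro h
    induction h using Fin.lastCases with
    | last => simp [hpbn]
    | cast j => simp [hpωb j]
  have hbωb' : ∀ h, db (ωb h) = (starRingEnd ℂ) (extZero A h) • (ωb (Fin.last m) * ωb h) := by
    intro h
    induction h using Fin.lastCases with
    | last => simp [hbbn]
    | cast j => simp [hbωb j]
  have key : ∀ h k : Fin (m + 1), dp (db (ω h * ωb k)) =
      gam A B h k • (ω (Fin.last m) * ωb (Fin.last m) * ω h * ωb k) := by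
    intro h k
    have := keyCalc dp db (ω (Fin.last m)) (ωb (Fin.last m)) (ω h) (ωb k)
      (extZero A h) (extZero B h) ((starRingEnd ℂ) (extZero B k)) ((starRingEnd ℂ) (extZero A k))
      (hswap _ (hωS h) _ (hωS _)) (hswap _ (hωS h) _ (hωbS _)) (hswap _ (hωbS _) _ (hωS _))
      (hbLeib _ (hspan _ (hωS h)) _) (hpLeib _ (hspan _ (hωS h)) _)
      (hpLeib _ (hspan _ (hωbS _)) _) (hpLeib _ (hspan _ (hωS h)) _)
      (hpLeib _ (hspan _ (hωbS _)) _)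
      (hpω' h) (hbω' h) (hpωb' k) (hbωb' k) hpbn
    rw [this]; rfl
  have hXr : ∀ h, ω (Fin.last m) * ωb (Fin.last m) * ω h * ωb (Fin.last m) = 0 := by
    intro h
    have h1 : ω h * ωb (Fin.last m) = -(ωb (Fin.last m) * ω h) := hanti _ (hωS h) _ (hωbS _)
    rw [mul_assoc, h1, mul_neg, ← mul_assoc, mul_assoc (ω (Fin.last m)), hq2, mul_zero,
      zero_mul, neg_zero]
  have hXl : ∀ k, ω (Fin.last m) * ωb (Fin.last m) * ω (Fin.last m) * ωb k = 0 := by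
    intro k
    have h1 : ωb (Fin.last m) * ω (Fin.last m) = -(ω (Fin.last m) * ωb (Fin.last m)) :=
      hanti _ (hωbS _) _ (hωS _)
    rw [mul_assoc (ω (Fin.last m)) (ωb (Fin.last m)) (ω (Fin.last m)), h1, mul_neg,
      ← mul_assoc, hp2, zero_mul, neg_zero, zero_mul]
  have hmain : dp (db F) =
      (∑ j : Fin m, (Complex.I / 2 * (αd j.castSucc : ℂ) * gam A B j.castSucc j.castSucc) •
          (ω (Fin.last m) * ωb (Fin.last m) * ω j.castSucc * ωb j.castSucc))
        + ∑ j : Fin m, ∑ k : Fin m,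
          (αo j.castSucc k.castSucc * gam A B j.castSucc k.castSucc) •
          (ω (Fin.last m) * ωb (Fin.last m) * ω j.castSucc * ωb k.castSucc) := by
    rw [hF]
    simp only [map_add, map_sum, map_smul, key, smul_smul, Fin.sum_univ_castSucc, hXl, hXr,
      smul_zero, add_zero, Finset.sum_const_zero]
  have hcoef := Fintype.linearIndependent_iff.mp hindep
    (fun pr : Fin m × Fin m =>
      ((if pr.1 = pr.2 then Complex.I / 2 * (αd pr.1.castSucc : ℂ) else 0)
          + αo pr.1.castSucc pr.2.castSucc) * gam A B pr.1.castSucc pr.2.castSucc)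
    (by
      rw [Fintype.sum_prod_type]
      simp only [add_mul, add_smul, ite_mul, zero_mul, ite_smul, zero_smul,
        Finset.sum_add_distrib, Finset.sum_ite_eq, Finset.mem_univ, if_true]
      rw [← hmain]
      exact hSKT)
  have hzero : ∀ j : Fin m, B j + (starRingEnd ℂ) (A j) = 0 := by
    intro j
    have h0 := hcoef (j, j)
    simp only [if_pos rfl, hαo, add_zero, gam, extZero_castSucc] at h0
    have hne : (Complex.I / 2 * (αd j.castSucc : ℂ)) ≠ 0 := by
      refine mul_ne_zero (div_ne_zero Complex.I_ne_zero two_ne_zero) ?_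
      exact_mod_cast (hαd j.castSucc).ne'
    rcases mul_eq_zero.mp h0 with h | h
    · exact absurd h hne
    rcases mul_eq_zero.mp h with h | h
    · simpa [add_comm] using congrArg (starRingEnd ℂ) h
    · exact h
  refine ⟨fun j => by simp [hzero j], ?_⟩
  have hz1 : ∀ h, extZero B h + (starRingEnd ℂ) (extZero A h) = 0 := by
    intro h
    induction h using Fin.lastCases with
    | last => simp
    | cast j => simpa using hzero j
  have hz2 : ∀ h, extZero A h + (starRingEnd ℂ) (extZero B h) = 0 := by
    intro h
    simpa [add_comm] using congrArg (starRingEnd ℂ) (hz1 h)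
  have hdω' : ∀ h, d (ω h) = extZero A h • (ω (Fin.last m) * ω h)
      + extZero B h • (ωb (Fin.last m) * ω h) := by
    intro h
    induction h using Fin.lastCases with
    | last => simp [hdn]
    | cast j => simp [hdω j]
  have hdωb' : ∀ h, d (ωb h) = (starRingEnd ℂ) (extZero A h) • (ωb (Fin.last m) * ωb h)
      + (starRingEnd ℂ) (extZero B h) • (ω (Fin.last m) * ωb h) := by
    intro h
    induction h using Fin.lastCases with
    | last => simp [hdbn]
    | cast j => simp [hdωb j]
  have hterm : ∀ h : Fin (m + 1), d (ω h * ωb h) = 0 := by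
    intro h
    refine dCalc d (ω (Fin.last m)) (ωb (Fin.last m)) (ω h) (ωb h)
      (extZero A h) (extZero B h) ((starRingEnd ℂ) (extZero A h)) ((starRingEnd ℂ) (extZero B h))
      (hswap _ (hωS h) _ (hωS _)) (hswap _ (hωS h) _ (hωbS _))
      (hdLeib _ (hspan _ (hωS h)) _) (hdω' h) ?_ (hz2 h) (hz1 h)
    rw [hdωb' h]
  rw [map_smul, map_sum]
  simp [hterm]
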